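/- For every integer N ≥ 0, (1/√2)·(1 + 2/(4N+5))^{N + 7/4}·√(N + 5/4) ≤ √((e/2)·(N + 3/2)). -/

import Mathlib

open Real

private lemma log_lower_aux (p : ℝ → ℝ) (p' : ℝ → ℝ)
    (hp : ∀ x, HasDerivAt p (p' x) x)
    (h0 : p 0 = 0)
    (hd : ∀ x : ℝ, 0 < x → p' x ≤ 1/(1+x)) :
    ∀ v : ℝ, 0 ≤ v → p v ≤ Real.log (1 + v) := by
  intro v hv
  set f : ℝ → ℝ := fun x => Real.log (1+x) - p x with hf
  have hcont : ContinuousOn f (Set.Ici 0) := by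
    apply ContinuousOn.sub
    · apply ContinuousOn.log ((continuous_const.add continuous_id).continuousOn)
      intro x hx
      simp only [Set.mem_Ici] at hx
      intro h; have h' : (1:ℝ) + x = 0 := h; linarith
    · exact (Differentiable.continuous (fun x => (hp x).differentiableAt)).continuousOn
  have key : ∀ x : ℝ, 0 < x → HasDerivAt f (1/(1+x) - p' x) x := by
    intro x hx
    have h1 : (0:ℝ) < 1 + x := by linarith
    have hlog : HasDerivAt (fun x : ℝ => Real.log (1+x)) (1/(1+x)) x := by
      have := (Real.hasDerivAt_log h1.ne').comp x ((hasDerivAt_id x).const_add 1)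
      simpa [one_div, Function.comp_def] using this
    exact hlog.sub (hp x)
  have mono : MonotoneOn f (Set.Ici 0) := by
    apply monotoneOn_of_deriv_nonneg (convex_Ici 0) hcont
    · intro x hx
      rw [interior_Ici] at hx
      exact (key x hx).differentiableAt.differentiableWithinAt
    · intro x hx
      rw [interior_Ici] at hx
      rw [(key x hx).deriv]
      have := hd x hx
      linarith
  have := mono (Set.self_mem_Ici) (Set.mem_Ici.2 hv) hv
  simp only [hf, h0, add_zero, Real.log_one] at this
  linarith [this]

private lemma log_upper_aux (q : ℝ → ℝ) (q' : ℝ → ℝ)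
    (hq : ∀ x, HasDerivAt q (q' x) x)
    (h0 : q 0 = 0)
    (hd : ∀ x : ℝ, 0 < x → 1/(1+x) ≤ q' x) :
    ∀ v : ℝ, 0 ≤ v → Real.log (1 + v) ≤ q v := by
  intro v hv
  set f : ℝ → ℝ := fun x => q x - Real.log (1+x) with hf
  have hcont : ContinuousOn f (Set.Ici 0) := by
    apply ContinuousOn.sub
    · exact (Differentiable.continuous (fun x => (hq x).differentiableAt)).continuousOn
    · apply ContinuousOn.log ((continuous_const.add continuous_id).continuousOn)
      intro x hx
      simp only [Set.mem_Ici] at hx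
      intro h; have h' : (1:ℝ) + x = 0 := h; linarith
  have key : ∀ x : ℝ, 0 < x → HasDerivAt f (q' x - 1/(1+x)) x := by
    intro x hx
    have h1 : (0:ℝ) < 1 + x := by linarith
    have hlog : HasDerivAt (fun x : ℝ => Real.log (1+x)) (1/(1+x)) x := by
      have := (Real.hasDerivAt_log h1.ne').comp x ((hasDerivAt_id x).const_add 1)
      simpa [one_div, Function.comp_def] using this
    exact (hq x).sub hlog
  have mono : MonotoneOn f (Set.Ici 0) := by
    apply monotoneOn_of_deriv_nonneg (convex_Ici 0) hcont
    · intro x hx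
      rw [interior_Ici] at hx
      exact (key x hx).differentiableAt.differentiableWithinAt
    · intro x hx
      rw [interior_Ici] at hx
      rw [(key x hx).deriv]
      have := hd x hx
      linarith
  have := mono (Set.self_mem_Ici) (Set.mem_Ici.2 hv) hv
  simp only [hf, h0, add_zero, Real.log_one] at this
  linarith [this]

private lemma log_lower (v : ℝ) (hv : 0 ≤ v) : v - v^2/2 ≤ Real.log (1 + v) := by
  refine log_lower_aux (fun x => x - x^2/2) (fun x => 1 - x) ?_ (by norm_num) ?_ v hv
  · intro x
    simpa [Pi.sub_def] using (hasDerivAt_id x).sub ((hasDerivAt_pow 2 x).div_const 2)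
  · intro x hx
    show 1 - x ≤ 1/(1+x)
    rw [le_div_iff₀ (by linarith)]
    nlinarith
private lemma log_upper (v : ℝ) (hv : 0 ≤ v) :
    Real.log (1 + v) ≤ v - v^2/2 + v^3/3 - v^4/4 + v^5/5 := by
  refine log_upper_aux (fun x => x - x^2/2 + x^3/3 - x^4/4 + x^5/5)
    (fun x => 1 - x + x^2 - x^3 + x^4) ?_ (by norm_num) ?_ v hv
  · intro x
    have h := ((((hasDerivAt_id x).sub ((hasDerivAt_pow 2 x).div_const 2)).add
      ((hasDerivAt_pow 3 x).div_const 3)).sub ((hasDerivAt_pow 4 x).div_const 4)).add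
      ((hasDerivAt_pow 5 x).div_const 5)
    refine h.congr_deriv ?_
    push_cast
    ring
  · intro x hx
    show 1/(1+x) ≤ 1 - x + x^2 - x^3 + x^4
    rw [div_le_iff₀ (by linarith)]
    nlinarith [pow_pos hx 5]

private lemma key_log_ineq (t : ℝ) (ht : 5 ≤ t) :
    (t + 2)/2 * Real.log (1 + 2/t) ≤ 1 + Real.log (1 + 1/t) := by
  have ht0 : (0:ℝ) < t := by linarith
  have h1 := log_upper (2/t) (by positivity)
  have h2 := log_lower (1/t) (by positivity)
  have hpoly : (t + 2)/2 * ((2/t) - (2/t)^2/2 + (2/t)^3/3 - (2/t)^4/4 + (2/t)^5/5)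
      ≤ 1 + ((1/t) - (1/t)^2/2) := by
    rw [div_mul_eq_mul_div, div_le_iff₀ (by norm_num)]
    have h5 : (0:ℝ) < t^5 := by positivity
    rw [show ((2:ℝ)/t) - (2/t)^2/2 + (2/t)^3/3 - (2/t)^4/4 + (2/t)^5/5
        = (2*t^4 - 2*t^3 + 8/3*t^2 - 4*t + 32/5)/t^5 by field_simp; ring]
    rw [show (1 + ((1:ℝ)/t - (1/t)^2/2)) * 2 = (2*t^5 + 2*t^4 - t^3)/t^5 by
        field_simp; ring]
    rw [← mul_div_assoc, div_le_div_iff₀ h5 h5]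
    nlinarith [mul_nonneg (mul_nonneg (sub_nonneg.2 ht) ht0.le) ht0.le,
      sq_nonneg (t - 5), sq_nonneg t]
  calc (t + 2)/2 * Real.log (1 + 2/t)
      ≤ (t + 2)/2 * ((2/t) - (2/t)^2/2 + (2/t)^3/3 - (2/t)^4/4 + (2/t)^5/5) := by
        apply mul_le_mul_of_nonneg_left h1 (by linarith)
    _ ≤ 1 + ((1/t) - (1/t)^2/2) := hpoly
    _ ≤ 1 + Real.log (1 + 1/t) := by linarith

theorem stmt_8 (N : ℕ) :
    (1 / Real.sqrt 2) * (1 + 2 / (4 * (N : ℝ) + 5)) ^ ((N : ℝ) + 7 / 4) *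
      Real.sqrt ((N : ℝ) + 5 / 4) ≤
    Real.sqrt ((Real.exp 1 / 2) * ((N : ℝ) + 3 / 2)) := by
  set t : ℝ := 4 * (N : ℝ) + 5 with htdef
  have hN : (0:ℝ) ≤ (N:ℝ) := Nat.cast_nonneg N
  have ht5 : (5:ℝ) ≤ t := by rw [htdef]; linarith
  have ht0 : (0:ℝ) < t := by linarith
  have hb : (0:ℝ) < 1 + 2/t := by positivity
  have hLnn : 0 ≤ (1 / Real.sqrt 2) * (1 + 2 / t) ^ ((N : ℝ) + 7 / 4) *
      Real.sqrt ((N : ℝ) + 5 / 4) := by positivity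
  rw [Real.le_sqrt hLnn (by positivity)]
  have hsq2 : Real.sqrt 2 ^ 2 = 2 := Real.sq_sqrt (by norm_num)
  have hsq54 : Real.sqrt ((N:ℝ) + 5/4) ^ 2 = (N:ℝ) + 5/4 :=
    Real.sq_sqrt (by positivity)
  have hrpowsq : ((1 + 2/t) ^ ((N : ℝ) + 7 / 4)) ^ 2 = (1 + 2/t) ^ ((t+2)/2) := by
    rw [← Real.rpow_natCast ((1 + 2/t) ^ ((N : ℝ) + 7 / 4)) 2, ← Real.rpow_mul hb.le]
    congr 1
    push_cast
    rw [htdef]; ring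
  rw [mul_pow, mul_pow, hsq54, hrpowsq, div_pow, hsq2, one_pow]
  have hmain : (1 + 2/t) ^ ((t+2)/2) ≤ Real.exp 1 * (1 + 1/t) := by
    have hlog := key_log_ineq t ht5
    have e1 : (1 + 2/t) ^ ((t+2)/2) = Real.exp ((t+2)/2 * Real.log (1 + 2/t)) := by
      rw [← Real.log_rpow hb, Real.exp_log (Real.rpow_pos_of_pos hb _)]
    have e2 : Real.exp 1 * (1 + 1/t) = Real.exp (1 + Real.log (1 + 1/t)) := by
      rw [Real.exp_add, Real.exp_log (by positivity)]
    rw [e1, e2]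
    exact Real.exp_le_exp.2 hlog
  have h54 : (N:ℝ) + 5/4 = t/4 := by rw [htdef]; ring
  have h32 : (N:ℝ) + 3/2 = (t+1)/4 := by rw [htdef]; ring
  rw [h54, h32]
  have hkey : (1 + 2/t) ^ ((t+2)/2) * (t/4) ≤ Real.exp 1 * ((t+1)/4) := by
    have hstep := mul_le_mul_of_nonneg_right hmain (show (0:ℝ) ≤ t/4 by positivity)
    calc (1 + 2/t) ^ ((t+2)/2) * (t/4) ≤ Real.exp 1 * (1 + 1/t) * (t/4) := hstep
      _ = Real.exp 1 * ((t+1)/4) := by field_simp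
  calc 1/2 * (1 + 2/t) ^ ((t+2)/2) * (t/4)
      = ((1 + 2/t) ^ ((t+2)/2) * (t/4))/2 := by ring
    _ ≤ (Real.exp 1 * ((t+1)/4))/2 := by linarith
    _ = Real.exp 1 / 2 * ((t+1)/4) := by ring
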